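/- arXiv:2403.10530 — 2 statements merged into one kernel-verified Lean document; each statement's English description precedes it below -/
import Mathlib

section
/- The sequence ρ_{b,i} = π(i² + i) / (2(√3 i² − (√3 − 6) i + (13√3/4 − 3))) is strictly increasing for i ≥ 2. -/
open Real

noncomputable def rhoB (i : ℕ) : ℝ :=
  π * ((i : ℝ) ^ 2 + i) /
    (2 * (Real.sqrt 3 * (i : ℝ) ^ 2 - (Real.sqrt 3 - 6) * i + (13 * Real.sqrt 3 / 4 - 3)))

theorem stmt_8 : ∀ i : ℕ, 2 ≤ i → rhoB i < rhoB (i + 1) := by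
  intro i hi
  have hx : (2:ℝ) ≤ (i:ℝ) := by exact_mod_cast hi
  unfold rhoB
  push_cast
  set s := Real.sqrt 3 with hs
  have hs3 : s ^ 2 = 3 := Real.sq_sqrt (by norm_num)
  have hs0 : 0 ≤ s := Real.sqrt_nonneg 3
  have hs1 : 1 < s := by nlinarith
  have hs2 : s < 2 := by nlinarith
  set x : ℝ := (i:ℝ) with hxdef
  have hD1 : 0 < 2 * (s * x ^ 2 - (s - 6) * x + (13 * s / 4 - 3)) := by nlinarith
  have hD2 : 0 < 2 * (s * (x + 1) ^ 2 - (s - 6) * (x + 1) + (13 * s / 4 - 3)) := by nlinarith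
  rw [div_lt_div_iff₀ hD1 hD2]
  have hpi := Real.pi_pos
  have key : (0:ℝ) < (12 - 4 * s) * x ^ 2 + 9 * s * x + 13 * s - 12 := by nlinarith
  nlinarith [mul_pos hpi key]
end

section
/- For every integer i ≥ 2, the hexagonal packing density inside a hexagon exceeds the triangular packing density inside a triangle: ρ_{d,i} > ρ_{b,i}. -/
open Real

noncomputable def rhoD (i : ℕ) : ℝ :=
  π * (3 * (i : ℝ) ^ 2 + 3 * i + 1) /
    ((3 * Real.sqrt 3 / 2) * (2 * (i : ℝ) + 2 / Real.sqrt 3) ^ 2)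

theorem stmt_16 : ∀ i : ℕ, 2 ≤ i → rhoD i > rhoB i := by
  intro i hi
  have hx : (2:ℝ) ≤ (i:ℝ) := by exact_mod_cast hi
  have hs : Real.sqrt 3 ^ 2 = 3 := Real.sq_sqrt (by norm_num)
  have hs0 : 0 < Real.sqrt 3 := Real.sqrt_pos.mpr (by norm_num)
  have hslt : Real.sqrt 3 < 2 := by nlinarith
  have hsgt : 1 < Real.sqrt 3 := by nlinarith
  have hpi : 0 < π := Real.pi_pos
  unfold rhoD rhoB
  set s := Real.sqrt 3 with hsdef
  set x : ℝ := (i:ℝ) with hxdef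
  have hsne : s ≠ 0 := ne_of_gt hs0
  have hexp : (3 * s / 2) * (2 * x + 2 / s) ^ 2 = 6 * s * x ^ 2 + 12 * x + 2 * s := by
    field_simp
    ring_nf
    nlinarith [hs]
  have hD1 : 0 < 2 * (s * x ^ 2 - (s - 6) * x + (13 * s / 4 - 3)) := by nlinarith
  have hD2 : 0 < (3 * s / 2) * (2 * x + 2 / s) ^ 2 := by
    rw [hexp]; nlinarith
  rw [gt_iff_lt, div_lt_div_iff₀ hD1 hD2, hexp]
  have hx0 : (0:ℝ) < x := by linarith
  have hpoly : 0 < (12 - 3*s)*x^3 + (3 + 27*s/4)*x^2 + (31*s/4 - 3)*x + (13*s/4 - 3) := by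
    have h1 : 0 < (12 - 3*s)*x^3 := mul_pos (by linarith) (by positivity)
    have h2 : 0 < (3 + 27*s/4)*x^2 := mul_pos (by linarith) (by positivity)
    have h3 : 0 < (31*s/4 - 3)*x := mul_pos (by linarith) hx0
    linarith
  nlinarith [mul_pos hpi hpoly]
end
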